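/- Let V be a 12-dimensional vector space over ℚ and let σ : V → V be a linear automorphism with σ⁶ = id. Suppose that tr(σ²) = 3, tr(σ³) = 4, and tr(σ) ∈ {1, 3}. Then tr(σ) = 1. -/

import Mathlib

open Module LinearMap Set TensorProduct

private lemma trace_pow_restrict_maxGenEigenspace'
    {K W : Type*} [Field K] [AddCommGroup W] [Module K W] [FiniteDimensional K W]
    (F : Module.End K W) (μ : K) (k : ℕ)
    (h : Set.MapsTo (F ^ k) (F.maxGenEigenspace μ) (F.maxGenEigenspace μ)) :
    LinearMap.trace K _ ((F ^ k).restrict h) =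
      μ ^ k * (finrank K (F.maxGenEigenspace μ) : K) := by
  set p := F.maxGenEigenspace μ with hp
  have hm : Set.MapsTo F p p := F.mapsTo_maxGenEigenspace_of_comm rfl μ
  have hms : Set.MapsTo (F - algebraMap K (Module.End K W) μ) p p :=
    Module.End.mapsTo_maxGenEigenspace_of_comm (Algebra.mul_sub_algebraMap_commutes F μ) μ
  have hnil : IsNilpotent ((F - algebraMap K (Module.End K W) μ).restrict hms) :=
    Module.End.isNilpotent_restrict_maxGenEigenspace_sub_algebraMap F μ
  set E : Module.End K p := F.restrict hm with hE
  have hEk : (F ^ k).restrict h = E ^ k := by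
    rw [hE]
    exact (Module.End.pow_restrict k hm h).symm
  obtain ⟨q, hq⟩ : (Polynomial.X - Polynomial.C μ) ∣
      (Polynomial.X ^ k - Polynomial.C μ ^ k : Polynomial K) := sub_dvd_pow_sub_pow _ _ k
  have hEsub : E - algebraMap K (Module.End K p) μ =
      (F - algebraMap K (Module.End K W) μ).restrict hms := by
    ext x
    simp [hE, LinearMap.restrict_apply, Module.algebraMap_end_apply]
    rfl
  have hnil' : IsNilpotent (E - algebraMap K (Module.End K p) μ) := hEsub ▸ hnil
  have hcomm : Commute (E - algebraMap K (Module.End K p) μ) (Polynomial.aeval E q) := by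
    have h1 : E - algebraMap K (Module.End K p) μ =
        Polynomial.aeval E (Polynomial.X - Polynomial.C μ) := by simp
    rw [h1, Commute, SemiconjBy, ← map_mul, ← map_mul, mul_comm]
  have hkey : IsNilpotent (E ^ k - algebraMap K (Module.End K p) (μ ^ k)) := by
    have h2 : E ^ k - algebraMap K (Module.End K p) (μ ^ k) =
        (E - algebraMap K (Module.End K p) μ) * Polynomial.aeval E q := by
      have := congrArg (Polynomial.aeval E) hq
      simpa [map_mul] using this
    rw [h2]
    exact hcomm.isNilpotent_mul_right hnil'
  have htr0 : LinearMap.trace K p (E ^ k - algebraMap K (Module.End K p) (μ ^ k)) = 0 :=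
    (LinearMap.isNilpotent_trace_of_isNilpotent hkey).eq_zero
  have halg : LinearMap.trace K p (algebraMap K (Module.End K p) (μ ^ k)) =
      μ ^ k * (finrank K p : K) := by
    rw [Module.algebraMap_end_eq_smul_id]
    simp [LinearMap.trace_id]
  rw [map_sub, sub_eq_zero] at htr0
  rw [hEk, htr0, halg]

private lemma int_re_im_aux' (ω : ℂ) (him : ω.im ≠ 0) (x y r : ℤ)
    (h : (x : ℂ) + (y : ℂ) * ω = (r : ℂ)) : x = r ∧ y = 0 := by
  have him2 := congrArg Complex.im h
  simp [Complex.add_im, Complex.mul_im] at him2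
  have hy : (y : ℝ) = 0 := by
    rcases him2 with h' | h'
    · exact_mod_cast h'
    · exact absurd h' him
  have hy0 : y = 0 := by exact_mod_cast hy
  subst hy0
  simp at h
  exact ⟨by exact_mod_cast h, rfl⟩

set_option maxHeartbeats 2000000 in
/-- Let `V` be a 12-dimensional rational vector space and `σ` a linear automorphism of `V` with
`σ⁶ = id`. If `tr(σ²) = 3`, `tr(σ³) = 4` and `tr(σ) ∈ {1, 3}`, then `tr(σ) = 1`. -/
theorem trace_of_order_six_automorphism
    (V : Type*) [AddCommGroup V] [Module ℚ V] [FiniteDimensional ℚ V]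
    (hV : Module.finrank ℚ V = 12) (σ : V ≃ₗ[ℚ] V) (h6 : σ ^ 6 = 1)
    (h2 : LinearMap.trace ℚ V (σ ^ 2).toLinearMap = 3)
    (h3 : LinearMap.trace ℚ V (σ ^ 3).toLinearMap = 4)
    (h1 : LinearMap.trace ℚ V σ.toLinearMap = 1 ∨ LinearMap.trace ℚ V σ.toLinearMap = 3) :
    LinearMap.trace ℚ V σ.toLinearMap = 1 := by
  classical
  rcases h1 with h1 | h1
  · exact h1
  exfalso
  set f : Module.End ℚ V := σ.toLinearMap with hf
  have hpow : ∀ k : ℕ, (σ ^ k).toLinearMap = f ^ k := by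
    intro k
    ext v
    simp [hf, LinearEquiv.pow_apply, Module.End.pow_apply]
  set F : Module.End ℂ (ℂ ⊗[ℚ] V) := f.baseChange ℂ with hF
  have hFpow : ∀ k : ℕ, F ^ k = (f ^ k).baseChange ℂ := fun k =>
    (LinearMap.baseChange_pow ℚ ℂ V f k).symm
  have htraceF : ∀ k : ℕ, LinearMap.trace ℂ _ (F ^ k) =
      ((LinearMap.trace ℚ V ((σ ^ k).toLinearMap) : ℚ) : ℂ) := by
    intro k
    rw [hFpow k, LinearMap.trace_baseChange, hpow k]
    norm_num
  have h6F : F ^ 6 = 1 := by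
    rw [hFpow 6, ← hpow 6, h6]
    exact LinearMap.baseChange_one ℚ _ -- maybe needs args
  -- spectral decomposition
  have hsup : ⨆ μ, F.maxGenEigenspace μ = ⊤ := Module.End.iSup_maxGenEigenspace_eq_top F
  have hind := F.independent_maxGenEigenspace
  have hInt := DirectSum.isInternal_submodule_of_iSupIndep_of_iSup_eq_top hind hsup
  have hfin : {μ : ℂ | F.maxGenEigenspace μ ≠ ⊥}.Finite :=
    WellFoundedGT.finite_ne_bot_of_iSupIndep hind
  have hmap : ∀ (k : ℕ) (μ : ℂ),
      Set.MapsTo (F ^ k) (F.maxGenEigenspace μ) (F.maxGenEigenspace μ) :=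
    fun k μ => F.mapsTo_maxGenEigenspace_of_comm ((Commute.refl F).pow_right k) μ
  set d : ℂ → ℕ := fun μ => finrank ℂ (F.maxGenEigenspace μ) with hd
  have htr : ∀ k : ℕ, ((LinearMap.trace ℚ V ((σ ^ k).toLinearMap) : ℚ) : ℂ) =
      ∑ μ ∈ hfin.toFinset, μ ^ k * (d μ : ℂ) := by
    intro k
    rw [← htraceF k, LinearMap.trace_eq_sum_trace_restrict' hInt hfin (hmap k)]
    exact Finset.sum_congr rfl fun μ _ => trace_pow_restrict_maxGenEigenspace' F μ k (hmap k μ)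
  have hroot : ∀ μ ∈ hfin.toFinset, μ ^ 6 = 1 := by
    intro μ hμ
    have hres := trace_pow_restrict_maxGenEigenspace' F μ 6 (hmap 6 μ)
    have hone : (F ^ 6).restrict (hmap 6 μ) = LinearMap.id := by
      ext x
      simp [h6F, LinearMap.restrict_apply]
    rw [hone] at hres
    rw [LinearMap.trace_id] at hres
    have hdne : (d μ : ℂ) ≠ 0 := by
      rw [Set.Finite.mem_toFinset] at hμ
      have : d μ ≠ 0 := by
        simp only [hd]
        rw [ne_eq, Submodule.finrank_eq_zero]
        exact hμ
      exact_mod_cast this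
    have : (d μ : ℂ) = μ ^ 6 * (d μ : ℂ) := hres
    field_simp at this
    tauto
  -- the sixth roots of unity
  set s3 : ℝ := Real.sqrt 3 with hs3
  have hs : s3 * s3 = 3 := Real.mul_self_sqrt (by norm_num)
  set ω : ℂ := ⟨-1/2, s3 / 2⟩ with hωdef
  have him : ω.im ≠ 0 := by
    have : ω.im = s3 / 2 := rfl
    rw [this, hs3]
    positivity
  have hω : ω ^ 2 + ω + 1 = 0 := by
    apply Complex.ext <;>
      simp [pow_two, Complex.mul_re, Complex.mul_im, hωdef] <;> nlinarith [hs]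
  -- auxiliary disequalities
  have hωsq : ω ^ 2 = -1 - ω := by linear_combination hω
  have himsq : (ω ^ 2).im = -ω.im := by rw [hωsq]; simp
  have hne1 : ∀ z : ℂ, z.im = 0 → z ≠ ω ∧ z ≠ -ω ∧ z ≠ ω ^ 2 ∧ z ≠ -ω ^ 2 := by
    intro z hz
    refine ⟨?_, ?_, ?_, ?_⟩ <;> intro h <;> apply him
    · rw [← h]; exact hz
    · have := congrArg Complex.im h
      rw [Complex.neg_im, hz] at this
      linarith [this]
    · have := congrArg Complex.im h
      rw [himsq, hz] at this
      linarith [this]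
    · have := congrArg Complex.im h
      rw [Complex.neg_im, himsq, hz] at this
      linarith [this]
  have hωω : ω ≠ -ω := by
    intro h
    exact one_ne_zero (by linear_combination hω - ((ω + 1)/2) * h : (1:ℂ) = 0)
  have hωω2 : ω ≠ ω ^ 2 := by
    intro h
    apply him
    have := congrArg Complex.im h
    rw [himsq] at this
    linarith [this]
  have hωnω2 : ω ≠ -ω ^ 2 := by
    intro h
    exact one_ne_zero (by linear_combination hω - h * (1 : ℂ) : (1:ℂ) = 0)
  have hnωω2 : -ω ≠ ω ^ 2 := by
    intro h
    exact one_ne_zero (by linear_combination hω + h : (1:ℂ) = 0)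
  have hnωnω2 : -ω ≠ -ω ^ 2 := by
    intro h
    exact hωω2 (by linear_combination -h)
  have hω2nω2 : ω ^ 2 ≠ -ω ^ 2 := by
    intro h
    exact one_ne_zero (by linear_combination (1 - ω) * hω + (ω/2) * h : (1:ℂ) = 0)
  have h1im : (1 : ℂ).im = 0 := rfl
  have hm1im : (-1 : ℂ).im = 0 := by simp
  obtain ⟨h1ω, h1nω, h1ω2, h1nω2⟩ := hne1 1 h1im
  obtain ⟨hm1ω, hm1nω, hm1ω2, hm1nω2⟩ := hne1 (-1) hm1im
  have h1m1 : (1 : ℂ) ≠ -1 := by norm_num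
  -- the finset of sixth roots of unity
  set S : Finset ℂ := insert 1 (insert (-1) (insert ω (insert (-ω) (insert (ω ^ 2)
    {-ω ^ 2})))) with hSdef
  have hsub : hfin.toFinset ⊆ S := by
    intro μ hμ
    have h6μ := hroot μ hμ
    have hfact : (μ - 1) * (μ + 1) * (μ - ω) * (μ + ω) * (μ - ω ^ 2) * (μ + ω ^ 2) = 0 := by
      linear_combination h6μ - ((μ^2 - 1) * (μ^2 * (ω^2 - ω + 1) - (ω - 1) * (ω^3 + 1))) * hω
    simp only [hSdef, Finset.mem_insert, Finset.mem_singleton]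
    rcases mul_eq_zero.mp hfact with h' | h'
    rotate_left
    · right; right; right; right; right; linear_combination h'
    rcases mul_eq_zero.mp h' with h' | h'
    rotate_left
    · right; right; right; right; left; linear_combination h'
    rcases mul_eq_zero.mp h' with h' | h'
    rotate_left
    · right; right; right; left; linear_combination h'
    rcases mul_eq_zero.mp h' with h' | h'
    rotate_left
    · right; right; left; linear_combination h'
    rcases mul_eq_zero.mp h' with h' | h'
    · left; linear_combination h'
    · right; left; linear_combination h'
  have hsum : ∀ k : ℕ, ((LinearMap.trace ℚ V ((σ ^ k).toLinearMap) : ℚ) : ℂ) =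
      ∑ μ ∈ S, μ ^ k * (d μ : ℂ) := by
    intro k
    rw [htr k]
    refine Finset.sum_subset hsub ?_
    intro μ _ hμ
    have : d μ = 0 := by
      rw [Set.Finite.mem_toFinset] at hμ
      have hbot : F.maxGenEigenspace μ = ⊥ := by simpa using hμ
      simp only [hd]
      rw [hbot]
      exact finrank_bot ℂ _
    rw [this]
    simp
  -- expand the sums
  have hexp : ∀ k : ℕ, ∑ μ ∈ S, μ ^ k * (d μ : ℂ) =
      1 ^ k * (d 1 : ℂ) + (-1) ^ k * (d (-1) : ℂ) + ω ^ k * (d ω : ℂ)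
        + (-ω) ^ k * (d (-ω) : ℂ) + (ω ^ 2) ^ k * (d (ω ^ 2) : ℂ)
        + (-ω ^ 2) ^ k * (d (-ω ^ 2) : ℂ) := by
    intro k
    rw [hSdef]
    rw [Finset.sum_insert (by
      simp only [Finset.mem_insert, Finset.mem_singleton, not_or]
      exact ⟨h1m1, h1ω, h1nω, h1ω2, h1nω2⟩)]
    rw [Finset.sum_insert (by
      simp only [Finset.mem_insert, Finset.mem_singleton, not_or]
      exact ⟨hm1ω, hm1nω, hm1ω2, hm1nω2⟩)]
    rw [Finset.sum_insert (by
      simp only [Finset.mem_insert, Finset.mem_singleton, not_or]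
      exact ⟨hωω, hωω2, hωnω2⟩)]
    rw [Finset.sum_insert (by
      simp only [Finset.mem_insert, Finset.mem_singleton, not_or]
      exact ⟨hnωω2, hnωnω2⟩)]
    rw [Finset.sum_insert (by
      simp only [Finset.mem_singleton]
      exact hω2nω2)]
    rw [Finset.sum_singleton]
    ring
  -- the three equations
  have E1 : (1:ℂ) ^ 1 * (d 1 : ℂ) + (-1) ^ 1 * (d (-1) : ℂ) + ω ^ 1 * (d ω : ℂ)
        + (-ω) ^ 1 * (d (-ω) : ℂ) + (ω ^ 2) ^ 1 * (d (ω ^ 2) : ℂ)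
        + (-ω ^ 2) ^ 1 * (d (-ω ^ 2) : ℂ) = (3 : ℂ) := by
    rw [← hexp 1, ← hsum 1, pow_one σ, h1]
    norm_num
  have E2 : (1:ℂ) ^ 2 * (d 1 : ℂ) + (-1) ^ 2 * (d (-1) : ℂ) + ω ^ 2 * (d ω : ℂ)
        + (-ω) ^ 2 * (d (-ω) : ℂ) + (ω ^ 2) ^ 2 * (d (ω ^ 2) : ℂ)
        + (-ω ^ 2) ^ 2 * (d (-ω ^ 2) : ℂ) = (3 : ℂ) := by
    rw [← hexp 2, ← hsum 2, h2]
    norm_num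
  have E3 : (1:ℂ) ^ 3 * (d 1 : ℂ) + (-1) ^ 3 * (d (-1) : ℂ) + ω ^ 3 * (d ω : ℂ)
        + (-ω) ^ 3 * (d (-ω) : ℂ) + (ω ^ 2) ^ 3 * (d (ω ^ 2) : ℂ)
        + (-ω ^ 2) ^ 3 * (d (-ω ^ 2) : ℂ) = (4 : ℂ) := by
    rw [← hexp 3, ← hsum 3, h3]
    norm_num
  set P : ℕ := d 1
  set Q : ℕ := d (-1)
  set A : ℕ := d ω
  set B : ℕ := d (-ω)
  set C : ℕ := d (ω ^ 2)
  set D : ℕ := d (-ω ^ 2)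
  -- reduce to normal form x + y ω = r
  have e1 : (((P : ℤ) - Q - C + D : ℤ) : ℂ) + (((A : ℤ) - B - C + D : ℤ) : ℂ) * ω = ((3 : ℤ) : ℂ) := by
    push_cast
    linear_combination E1 + ((D : ℂ) - C) * hω
  have e2 : (((P : ℤ) + Q - A - B : ℤ) : ℂ) + (((C : ℤ) + D - A - B : ℤ) : ℂ) * ω = ((3 : ℤ) : ℂ) := by
    push_cast
    linear_combination E2 + (-(A : ℂ) - B - ((C : ℂ) + D) * ω * (ω - 1)) * hω
  have e3 : (((P : ℤ) - Q + A - B + C - D : ℤ) : ℂ) + ((0 : ℤ) : ℂ) * ω = ((4 : ℤ) : ℂ) := by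
    push_cast
    linear_combination E3 - ((A : ℂ) - B) * (ω - 1) * hω - ((C : ℂ) - D) * (ω - 1) * (ω ^ 3 + 1) * hω
  obtain ⟨f1, f2⟩ := int_re_im_aux' ω him _ _ _ e1
  obtain ⟨f3, f4⟩ := int_re_im_aux' ω him _ _ _ e2
  obtain ⟨f5, _⟩ := int_re_im_aux' ω him _ _ _ e3
  omega
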